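/- Suppose u : [t₀, t₀+T] → ℝ is a feasible battery control with E_B(t₀) = 0, E_B ≥ 0, E_B' = u/η_B on {u < 0} and E_B' = η_B·u on {u ≥ 0} (η_B ∈ (0,1]), and u(t) ≤ D + η_pv·P_pv(t) − P_load(t) for all t. If D + η_pv·P_pv(t₀) − P_load(t₀) < 0 (i.e., t₀ ∈ S₁) and the data are continuous, then no such feasible control exists. -/

import Mathlib

theorem no_feasible_control (t₀ T D η_pv η_B : ℝ) (hT : 0 < T)
    (hη : 0 < η_B) (hη1 : η_B ≤ 1)
    (Ppv Pload u E_B : ℝ → ℝ)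
    (hucont : ContinuousOn u (Set.Icc t₀ (t₀ + T)))
    (hPpvcont : ContinuousOn Ppv (Set.Icc t₀ (t₀ + T)))
    (hPloadcont : ContinuousOn Pload (Set.Icc t₀ (t₀ + T)))
    (hu : ∀ t ∈ Set.Icc t₀ (t₀ + T), u t ≤ D + η_pv * Ppv t - Pload t)
    (hE0 : E_B t₀ = 0)
    (hEnn : ∀ t ∈ Set.Icc t₀ (t₀ + T), 0 ≤ E_B t)
    (hderiv : ∀ t ∈ Set.Icc t₀ (t₀ + T),
      HasDerivWithinAt E_B (if u t < 0 then u t / η_B else η_B * u t)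
        (Set.Icc t₀ (t₀ + T)) t)
    (ht0 : D + η_pv * Ppv t₀ - Pload t₀ < 0) :
    False := by
  set I := Set.Icc t₀ (t₀ + T) with hI
  have ht0I : t₀ ∈ I := by constructor <;> nlinarith
  set g : ℝ → ℝ := fun t => D + η_pv * Ppv t - Pload t with hg
  have hgcont : ContinuousOn g I := by
    apply ContinuousOn.sub _ hPloadcont
    exact (continuousOn_const.add (continuousOn_const.mul hPpvcont))
  set ε : ℝ := -(g t₀) / 2 with hε
  have hεpos : 0 < ε := by simp only [hε]; linarith [ht0]
  -- find δ
  have hev : ∀ᶠ t in nhdsWithin t₀ I, g t < -ε := by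
    have := (hgcont t₀ ht0I).eventually (eventually_lt_nhds (show g t₀ < -ε by simp [hε]; linarith))
    exact this
  obtain ⟨δ, hδpos, hδ⟩ := Metric.mem_nhdsWithin_iff.1 hev
  set t₁ : ℝ := min (t₀ + δ / 2) (t₀ + T) with ht₁
  have ht₁I : t₁ ∈ I := by
    constructor
    · simp only [ht₁, le_min_iff]; constructor <;> nlinarith
    · exact min_le_right _ _
  have ht₁gt : t₀ < t₁ := by
    simp only [ht₁, lt_min_iff]; constructor <;> nlinarith
  have hsub : Set.Icc t₀ t₁ ⊆ I := Set.Icc_subset_Icc le_rfl ht₁I.2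
  -- on [t₀, t₁], u t ≤ -ε and the derivative of E_B is ≤ -ε
  have key : ∀ t ∈ Set.Icc t₀ t₁, (if u t < 0 then u t / η_B else η_B * u t) ≤ -ε := by
    intro t ht
    have htI : t ∈ I := hsub ht
    have hdist : dist t t₀ < δ := by
      rw [Real.dist_eq, abs_of_nonneg (by linarith [ht.1])]
      have : t ≤ t₀ + δ / 2 := le_trans ht.2 (min_le_left _ _)
      linarith
    have hgt : g t < -ε := hδ ⟨Metric.mem_ball.2 hdist, htI⟩
    have hut : u t ≤ -ε := le_of_lt (lt_of_le_of_lt (hu t htI) hgt)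
    have huneg : u t < 0 := lt_of_le_of_lt hut (by linarith)
    rw [if_pos huneg]
    have : u t / η_B ≤ u t := by
      rw [div_le_iff₀ hη]
      nlinarith
    linarith
  -- f t = E_B t + ε * t is antitone on [t₀, t₁]
  have hcontE : ContinuousOn E_B (Set.Icc t₀ t₁) := fun t ht =>
    ((hderiv t (hsub ht)).continuousWithinAt).mono hsub
  have hanti : AntitoneOn (fun t => E_B t + ε * t) (Set.Icc t₀ t₁) := by
    apply antitoneOn_of_hasDerivWithinAt_nonpos (convex_Icc t₀ t₁)
      (f' := fun t => (if u t < 0 then u t / η_B else η_B * u t) + ε)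
      (hcontE.add (continuousOn_const.mul continuousOn_id))
    · intro x hx
      have hx' : x ∈ Set.Icc t₀ t₁ := interior_subset hx
      have := ((hderiv x (hsub hx')).mono hsub).mono interior_subset
      exact this.add (((hasDerivWithinAt_id x _).const_mul ε).congr_deriv (mul_one ε))
    · intro x hx
      have hx' : x ∈ Set.Icc t₀ t₁ := interior_subset hx
      linarith [key x hx']
  have h1 : E_B t₁ + ε * t₁ ≤ E_B t₀ + ε * t₀ :=
    hanti (Set.left_mem_Icc.2 (le_of_lt ht₁gt)) (Set.right_mem_Icc.2 (le_of_lt ht₁gt))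
      (le_of_lt ht₁gt)
  have h2 : 0 ≤ E_B t₁ := hEnn t₁ ht₁I
  rw [hE0] at h1
  nlinarith
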